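/- arXiv:1907.00313 — 3 statements merged into one kernel-verified Lean document; each statement's English description precedes it below -/
import Mathlib

section
/- For the strict-rate-constrained UCB algorithm there exists an absolute constant C > 0 (independent of K, T, v, and the reward distributions) such that the regret satisfies Reg_T ≤ Σ_{i : Δ_i > 0} [ (16·ln T / Δ_i)·(1 − K·v)/(1 − (K−1)·v) + 2·(1 − K·v)²·Δ_i ] + C·K. -/
open MeasureTheory ProbabilityTheory Finset

namespace FairBandit

variable {Ω : Type} [MeasurableSpace Ω]

/-- Number of pulls of arm `i` among rounds `1, …, t`. -/
def pullCount {K : ℕ} (arm : ℕ → Ω → Fin K) (i : Fin K) (t : ℕ) (ω : Ω) : ℕ :=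
  ((Finset.Icc 1 t).filter (fun s => arm s ω = i)).card

/-- Empirical mean of arm `i` at round `t`:  average of the first `n_{t-1}(i)`
samples `X i 0, X i 1, …` of arm `i` (the sample `X i k` is observed at the
`(k+1)`-st pull of arm `i`). -/
noncomputable def empMean {K : ℕ} (X : Fin K → ℕ → Ω → ℝ) (arm : ℕ → Ω → Fin K)
    (i : Fin K) (t : ℕ) (ω : Ω) : ℝ :=
  (∑ k ∈ Finset.range (pullCount arm i (t - 1) ω), X i k ω) / (pullCount arm i (t - 1) ω)

/-- Upper confidence bound of arm `i` at round `t`. -/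
noncomputable def ucb {K : ℕ} (T : ℕ) (X : Fin K → ℕ → Ω → ℝ) (arm : ℕ → Ω → Fin K)
    (i : Fin K) (t : ℕ) (ω : Ω) : ℝ :=
  empMean X arm i t ω + 2 * Real.sqrt (Real.log T / (pullCount arm i (t - 1) ω))

/-- The stochastic bandit environment: for every arm `i` the samples
`X i 0, X i 1, …` take values in `[0,1]`, the whole family is (jointly)
independent, the samples of each arm are identically distributed, and the
mean of every sample of arm `i` is `μ i`. -/
def BanditEnv {K : ℕ} (P : Measure Ω) (X : Fin K → ℕ → Ω → ℝ) (μ : Fin K → ℝ) : Prop :=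
  (∀ i k, Measurable (X i k)) ∧
  (∀ i k ω, X i k ω ∈ Set.Icc (0 : ℝ) 1) ∧
  iIndepFun
    (fun p : Fin K × ℕ => X p.1 p.2) P ∧
  (∀ i k, Measure.map (X i k) P = Measure.map (X i 0) P) ∧
  (∀ i k, ∫ ω, X i k ω ∂P = μ i)

/-- Block offset of a round `t > K`:  writing `t - K = (j-1)·L + s` with
`s ∈ {1, …, L}`, the offset is `s`. -/
def offset (K L t : ℕ) : ℕ := (t - K - 1) % L + 1

/-- The non-prescheduled rounds among `{K+1, …, T}`. -/
def freeRounds (K L T : ℕ) (S : Finset ℕ) : Finset ℕ :=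
  (Finset.Icc (K + 1) T).filter (fun t => offset K L t ∉ S)

/-- The strict-rate-constrained UCB algorithm: the pulled arm `arm t` is the
`t`-th arm for `t = 1, …, K`; afterwards, prescheduled rounds (block offset in
`S`) pull the prescheduled arm `g s`, and all other rounds pull the arm with
largest UCB index (ties broken by smallest index). -/
def StrictUCB {K : ℕ} (T L : ℕ) (S : Finset ℕ) (g : ℕ → Fin K)
    (X : Fin K → ℕ → Ω → ℝ) (arm : ℕ → Ω → Fin K) : Prop :=
  (∀ t, Measurable (arm t)) ∧
  (∀ t ω, 1 ≤ t → t ≤ K → ((arm t ω : ℕ) = t - 1)) ∧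
  (∀ t ω, K < t → offset K L t ∈ S → arm t ω = g (offset K L t)) ∧
  (∀ t ω, K < t → offset K L t ∉ S →
    (∀ j, ucb T X arm j t ω ≤ ucb T X arm (arm t ω) t ω) ∧
    (∀ j, ucb T X arm j t ω = ucb T X arm (arm t ω) t ω → arm t ω ≤ j))


variable {P : Measure Ω} {K T L : ℕ} {S : Finset ℕ} {g : ℕ → Fin K} {X : Fin K → ℕ → Ω → ℝ}
  {arm : ℕ → Ω → Fin K} {μ : Fin K → ℝ} {istar : Fin K}

lemma arm_init (halg : StrictUCB T L S g X arm) (i : Fin K) (ω : Ω) :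
    arm ((i : ℕ) + 1) ω = i := by
  have h := halg.2.1 ((i : ℕ) + 1) ω (by omega) (by omega)
  exact Fin.ext (by omega)

lemma one_le_pullCount (halg : StrictUCB T L S g X arm) (i : Fin K) {t : ℕ}
    (ht : K ≤ t) (ω : Ω) : 1 ≤ pullCount arm i t ω := by
  refine Finset.card_pos.2 ⟨(i : ℕ) + 1, Finset.mem_filter.2 ⟨Finset.mem_Icc.2 ⟨by omega, ?_⟩,
    arm_init halg i ω⟩⟩
  have := i.isLt; omega

lemma pullCount_le (i : Fin K) (t : ℕ) (ω : Ω) : pullCount arm i t ω ≤ t := by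
  calc pullCount arm i t ω ≤ (Finset.Icc 1 t).card := Finset.card_filter_le _ _
  _ = t := by rw [Nat.card_Icc]; omega

lemma pull_small (hT2 : 2 ≤ T) (halg : StrictUCB T L S g X arm) {ω : Ω}
    (hgood : ∀ (j : Fin K) (n : ℕ), 1 ≤ n → n ≤ T →
      |(∑ k ∈ Finset.range n, X j k ω) - n * μ j| ≤ 2 * Real.sqrt (n * Real.log T))
    {i : Fin K} (hΔ : 0 < μ istar - μ i) {t : ℕ} (htK : K < t) (htT : t ≤ T)
    (hfree : offset K L t ∉ S) (hit : arm t ω = i) :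
    (pullCount arm i (t - 1) ω : ℝ) * (μ istar - μ i) ^ 2 ≤ 16 * Real.log T := by
  have hlog : 0 ≤ Real.log T := Real.log_nonneg (by exact_mod_cast Nat.one_le_of_lt hT2)
  -- deviation bound for any arm j
  have hdev : ∀ j : Fin K, |empMean X arm j t ω - μ j| ≤
      2 * Real.sqrt (Real.log T / (pullCount arm j (t - 1) ω)) := by
    intro j
    set nj := pullCount arm j (t - 1) ω with hnj
    have h1 : 1 ≤ nj := one_le_pullCount halg j (by omega) ω
    have h2 : nj ≤ T := le_trans (pullCount_le j (t - 1) ω) (by omega)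
    have hpos : (0 : ℝ) < nj := by exact_mod_cast h1
    have key : Real.sqrt ((nj : ℝ) * Real.log T) = Real.sqrt (Real.log T / nj) * nj := by
      rw [show ((nj : ℝ) * Real.log T) = (Real.log T / nj) * (nj : ℝ) ^ 2 by field_simp,
        Real.sqrt_mul (by positivity), Real.sqrt_sq hpos.le]
    have hg := hgood j nj h1 h2
    rw [empMean, ← hnj]
    have hdiv : (∑ k ∈ Finset.range nj, X j k ω) / (nj:ℝ) * (nj:ℝ)
        = ∑ k ∈ Finset.range nj, X j k ω := div_mul_cancel₀ _ hpos.ne'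
    rw [abs_le] at hg ⊢
    constructor <;>
      nlinarith [hg.1, hg.2, key, hdiv, hpos, Real.sqrt_nonneg (Real.log (T:ℝ) / (nj:ℝ))]
  have hn1 : 1 ≤ pullCount arm i (t - 1) ω := one_le_pullCount halg i (by omega) ω
  have hnpos : (0:ℝ) < (pullCount arm i (t - 1) ω : ℝ) := by exact_mod_cast hn1
  have hmax := (halg.2.2.2 t ω htK hfree).1 istar
  rw [hit] at hmax
  have hdi := hdev i
  have hds := hdev istar
  rw [abs_le] at hdi hds
  simp only [ucb] at hmax
  have hchain : μ istar - μ i ≤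
      4 * Real.sqrt (Real.log T / (pullCount arm i (t - 1) ω : ℝ)) := by
    nlinarith [hdi.2, hds.1, Real.sqrt_nonneg (Real.log (T:ℝ) / (pullCount arm i (t - 1) ω : ℝ)),
      Real.sqrt_nonneg (Real.log (T:ℝ) / (pullCount arm istar (t - 1) ω : ℝ))]
  have hsq : (μ istar - μ i) ^ 2 ≤ 16 * (Real.log T / (pullCount arm i (t - 1) ω : ℝ)) := by
    nlinarith [Real.sq_sqrt (show (0:ℝ) ≤ Real.log T / (pullCount arm i (t - 1) ω : ℝ) by positivity),
      hchain, Real.sqrt_nonneg (Real.log (T:ℝ) / (pullCount arm i (t - 1) ω : ℝ)), hΔ]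
  calc (pullCount arm i (t - 1) ω : ℝ) * (μ istar - μ i) ^ 2
      ≤ (pullCount arm i (t - 1) ω : ℝ) * (16 * (Real.log T / (pullCount arm i (t - 1) ω : ℝ))) :=
        mul_le_mul_of_nonneg_left hsq hnpos.le
  _ = 16 * Real.log T := by field_simp

lemma count_bound (hKL : K < L) (hS : S ⊆ Finset.Icc 1 L) (hSc : S.card = K)
    (hg : Set.BijOn g ↑S (Set.univ : Set (Fin K)))
    (halg : StrictUCB T L S g X arm) (ω : Ω) (i : Fin K) {u : ℝ} (hu : 0 ≤ u)
    (hkey : ∀ t ∈ freeRounds K L T S, arm t ω = i → (pullCount arm i (t - 1) ω : ℝ) ≤ u) :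
    (((freeRounds K L T S).filter (fun t => arm t ω = i)).card : ℝ) ≤
      (u + 2) * ((L - K : ℕ) : ℝ) / (((L - K : ℕ) : ℝ) + 1) := by
  classical
  set F := (freeRounds K L T S).filter (fun t => arm t ω = i) with hF
  set M := L - K with hMdef
  have hM1 : 1 ≤ M := by omega
  have hMpos : (0:ℝ) < (M:ℝ) := by exact_mod_cast hM1
  rcases F.eq_empty_or_nonempty with hFe | hFne
  · rw [hFe]; simp; positivity
  set t₀ := F.max' hFne with ht₀def
  have ht₀F : t₀ ∈ F := F.max'_mem hFne
  have ht₀mem := Finset.mem_filter.1 ht₀F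
  have harm0 : arm t₀ ω = i := ht₀mem.2
  have ht₀free := Finset.mem_filter.1 ht₀mem.1
  have ht₀Icc := Finset.mem_Icc.1 ht₀free.1
  have hoff0 : offset K L t₀ ∉ S := ht₀free.2
  have hLpos : 0 < L := by omega
  obtain ⟨b, hb1, hbL, hbmax⟩ : ∃ b, 1 ≤ b ∧ (b - 1) * L ≤ t₀ - K - 1 ∧
      (∀ t, t ≤ t₀ → (t - K - 1) / L + 1 ≤ b) := by
    refine ⟨(t₀ - K - 1) / L + 1, Nat.le_add_left 1 _, ?_,
      fun t ht => Nat.add_le_add_right (Nat.div_le_div_right (by omega)) 1⟩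
    simpa using Nat.div_mul_le_self (t₀ - K - 1) L
  -- Claim 1 : F.card ≤ b * M
  have hclaim1 : F.card ≤ b * M := by
    have := Finset.card_le_card_of_injOn (s := F)
      (f := fun t => ((t - K - 1) / L + 1, offset K L t))
      (t := (Finset.Icc 1 b) ×ˢ ((Finset.Icc 1 L) \ S)) ?_ ?_
    · calc F.card ≤ ((Finset.Icc 1 b) ×ˢ ((Finset.Icc 1 L) \ S)).card := this
      _ = b * M := by
          rw [Finset.card_product, Nat.card_Icc, Finset.card_sdiff_of_subset hS, Nat.card_Icc, hSc]
          congr 1 <;> omega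
    · intro t htF
      have htmem := Finset.mem_filter.1 htF
      have htfree := Finset.mem_filter.1 htmem.1
      have htIcc := Finset.mem_Icc.1 htfree.1
      have hle : t ≤ t₀ := F.le_max' t htF
      have hmod := Nat.mod_lt (t - K - 1) hLpos
      simp only [Finset.mem_coe, Finset.mem_product, Finset.mem_Icc, Finset.mem_sdiff, offset]
      exact ⟨⟨Nat.le_add_left 1 _, hbmax t hle⟩,
        ⟨Nat.le_add_left 1 _, Nat.succ_le_of_lt hmod⟩, htfree.2⟩
    · intro t ht t' ht' hpair
      have htmem := Finset.mem_filter.1 (Finset.mem_filter.1 ht).1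
      have htIcc := Finset.mem_Icc.1 htmem.1
      have ht'mem := Finset.mem_filter.1 (Finset.mem_filter.1 ht').1
      have ht'Icc := Finset.mem_Icc.1 ht'mem.1
      obtain ⟨h1, h2⟩ : (t - K - 1) / L + 1 = (t' - K - 1) / L + 1 ∧
          offset K L t = offset K L t' := by
        simpa [Prod.ext_iff] using hpair
      simp only [offset] at h2
      have h1' : (t - K - 1) / L = (t' - K - 1) / L := by omega
      have h2' : (t - K - 1) % L = (t' - K - 1) % L := by omega
      have e1 := Nat.div_add_mod (t - K - 1) L
      have e2 := Nat.div_add_mod (t' - K - 1) L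
      rw [h1', h2'] at e1
      have heq : t - K - 1 = t' - K - 1 := e1.symm.trans e2
      omega
  -- the prescheduled offset for arm i
  obtain ⟨si, hsiS, hgsi⟩ : ∃ si ∈ S, g si = i := by
    have := hg.surjOn (Set.mem_univ i)
    obtain ⟨si, hsi, hgsi⟩ := this
    exact ⟨si, hsi, hgsi⟩
  have hsiIcc := Finset.mem_Icc.1 (hS hsiS)
  -- Claim 2 : b + F.card ≤ pullCount arm i (t₀ - 1) ω + 1
  have hclaim2 : b + F.card ≤ pullCount arm i (t₀ - 1) ω + 1 := by
    set A1 : Finset ℕ := {(i : ℕ) + 1} with hA1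
    set A2 := (Finset.Icc 1 (b - 1)).image (fun j => K + (j - 1) * L + si) with hA2
    set A3 := F.erase t₀ with hA3
    have hiK : (i : ℕ) < K := i.isLt
    -- membership facts for A2
    have hA2mem : ∀ r ∈ A2, (K + 1 ≤ r ∧ r ≤ t₀ - 1) ∧ offset K L r = si ∧ arm r ω = i := by
      intro r hr
      obtain ⟨j, hj, rfl⟩ := Finset.mem_image.1 hr
      have hjIcc := Finset.mem_Icc.1 hj
      have hjb : (j - 1) * L + L ≤ (b - 1) * L := by
        have : j - 1 + 1 ≤ b - 1 := by omega
        calc (j - 1) * L + L = (j - 1 + 1) * L := by ring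
        _ ≤ (b - 1) * L := Nat.mul_le_mul_right L this
      have hrle : K + (j - 1) * L + si ≤ t₀ - 1 := by omega
      have hoffr : offset K L (K + (j - 1) * L + si) = si := by
        simp only [offset]
        have : K + (j - 1) * L + si - K - 1 = (si - 1) + (j - 1) * L := by omega
        rw [this, Nat.add_mul_mod_self_right, Nat.mod_eq_of_lt (by omega)]
        omega
      refine ⟨⟨by omega, hrle⟩, hoffr, ?_⟩
      have := halg.2.2.1 (K + (j - 1) * L + si) ω (by omega) (by rw [hoffr]; exact hsiS)
      rw [this, hoffr, hgsi]
    -- all three are subsets of the pulls of arm i up to t₀ - 1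
    have hsub : A1 ∪ A2 ∪ A3 ⊆ (Finset.Icc 1 (t₀ - 1)).filter (fun s => arm s ω = i) := by
      intro r hr
      rcases Finset.mem_union.1 hr with hr | hr3
      · rcases Finset.mem_union.1 hr with hr1 | hr2
        · rw [hA1, Finset.mem_singleton] at hr1
          subst hr1
          exact Finset.mem_filter.2 ⟨Finset.mem_Icc.2 ⟨by omega, by omega⟩, arm_init halg i ω⟩
        · obtain ⟨⟨h1, h2⟩, _, h4⟩ := hA2mem r hr2
          exact Finset.mem_filter.2 ⟨Finset.mem_Icc.2 ⟨by omega, h2⟩, h4⟩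
      · have hrF : r ∈ F := Finset.mem_of_mem_erase hr3
        have hrne : r ≠ t₀ := Finset.ne_of_mem_erase hr3
        have hrle : r ≤ t₀ := F.le_max' r hrF
        have hrmem := Finset.mem_filter.1 hrF
        have hrIcc := Finset.mem_Icc.1 (Finset.mem_filter.1 hrmem.1).1
        exact Finset.mem_filter.2 ⟨Finset.mem_Icc.2 ⟨by omega, by omega⟩, hrmem.2⟩
    have hd12 : Disjoint A1 A2 := by
      rw [Finset.disjoint_left]
      intro r hr1 hr2
      rw [hA1, Finset.mem_singleton] at hr1
      obtain ⟨⟨h1, _⟩, _, _⟩ := hA2mem r hr2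
      omega
    have hd3 : Disjoint (A1 ∪ A2) A3 := by
      rw [Finset.disjoint_left]
      intro r hr hr3
      have hrF : r ∈ F := Finset.mem_of_mem_erase hr3
      have hrmem := Finset.mem_filter.1 hrF
      have hrfree := Finset.mem_filter.1 hrmem.1
      have hrIcc := Finset.mem_Icc.1 hrfree.1
      rcases Finset.mem_union.1 hr with hr1 | hr2
      · rw [hA1, Finset.mem_singleton] at hr1; omega
      · obtain ⟨_, hoffr, _⟩ := hA2mem r hr2
        exact hrfree.2 (hoffr ▸ hsiS)
    have hcA1 : A1.card = 1 := Finset.card_singleton _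
    have hcA2 : A2.card = b - 1 := by
      have hinj : Set.InjOn (fun j => K + (j - 1) * L + si) (Finset.Icc 1 (b - 1)) := by
        intro j hj j' hj' he
        simp only [Finset.coe_Icc, Set.mem_Icc] at hj hj'
        simp only at he
        have : (j - 1) * L = (j' - 1) * L := by omega
        have := Nat.eq_of_mul_eq_mul_right hLpos this
        omega
      rw [hA2, Finset.card_image_of_injOn hinj, Nat.card_Icc]
      omega
    have hcA3 : A3.card = F.card - 1 := Finset.card_erase_of_mem ht₀F
    have hcard := Finset.card_le_card hsub
    rw [Finset.card_union_of_disjoint hd3, Finset.card_union_of_disjoint hd12,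
      hcA1, hcA2, hcA3] at hcard
    have hf1 : 1 ≤ F.card := Finset.card_pos.2 hFne
    have : pullCount arm i (t₀ - 1) ω
        = ((Finset.Icc 1 (t₀ - 1)).filter (fun s => arm s ω = i)).card := rfl
    omega
  -- wrap up with real arithmetic
  have hn := hkey t₀ ht₀mem.1 harm0
  have hc1R : (F.card : ℝ) ≤ (b : ℝ) * (M : ℝ) := by exact_mod_cast hclaim1
  have hc2R : (b : ℝ) + (F.card : ℝ) ≤ (pullCount arm i (t₀ - 1) ω : ℝ) + 1 := by
    exact_mod_cast hclaim2
  rw [div_eq_mul_inv, ← div_eq_mul_inv, le_div_iff₀ (by positivity)]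
  nlinarith [hc1R, hc2R, hn, hMpos, hu]



open Real in
lemma mgf_bound_of_bounded [IsProbabilityMeasure P] {Y : Ω → ℝ} (hY : Measurable Y)
    (hb : ∀ ω, |Y ω| ≤ 1) (hm : ∫ ω, Y ω ∂P = 0) (t : ℝ) :
    mgf Y P t ≤ Real.exp (t ^ 2 / 2) := by
  have hint : Integrable Y P :=
    (integrable_const 1).mono' hY.aestronglyMeasurable (Filter.Eventually.of_forall hb)
  have hpt : ∀ ω, Real.exp (t * Y ω) ≤
      (1 - Y ω) / 2 * Real.exp (-t) + (1 + Y ω) / 2 * Real.exp t := by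
    intro ω
    have h1 : |Y ω| ≤ 1 := hb ω
    rw [abs_le] at h1
    have ha : (0:ℝ) ≤ (1 - Y ω) / 2 := by linarith
    have hb' : (0:ℝ) ≤ (1 + Y ω) / 2 := by linarith
    have hab : (1 - Y ω) / 2 + (1 + Y ω) / 2 = 1 := by ring
    have := convexOn_exp.2 (Set.mem_univ (-t)) (Set.mem_univ t) ha hb' hab
    have he : (1 - Y ω) / 2 * (-t) + (1 + Y ω) / 2 * t = t * Y ω := by ring
    rw [smul_eq_mul, smul_eq_mul, he] at this
    exact this
  have hintexp : Integrable (fun ω => Real.exp (t * Y ω)) P := by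
    refine (integrable_const (Real.exp |t|)).mono'
      ((hY.const_mul t).exp).aestronglyMeasurable (Filter.Eventually.of_forall fun ω => ?_)
    rw [Real.norm_eq_abs, abs_of_pos (Real.exp_pos _)]
    apply Real.exp_le_exp.2
    calc t * Y ω ≤ |t * Y ω| := le_abs_self _
    _ = |t| * |Y ω| := abs_mul _ _
    _ ≤ |t| * 1 := by gcongr; exact hb ω
    _ = |t| := mul_one _
  have hrhs : Integrable (fun ω => (1 - Y ω) / 2 * Real.exp (-t) + (1 + Y ω) / 2 * Real.exp t) P := by
    apply Integrable.add
    · exact (((integrable_const (1:ℝ)).sub hint).div_const 2).mul_const _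
    · exact (((integrable_const (1:ℝ)).add hint).div_const 2).mul_const _
  calc mgf Y P t = ∫ ω, Real.exp (t * Y ω) ∂P := rfl
  _ ≤ ∫ ω, ((1 - Y ω) / 2 * Real.exp (-t) + (1 + Y ω) / 2 * Real.exp t) ∂P :=
      integral_mono hintexp hrhs hpt
  _ = Real.cosh t := by
      have e1 : Integrable (fun ω => (1 - Y ω) / 2 * Real.exp (-t)) P :=
        (((integrable_const (1:ℝ)).sub hint).div_const 2).mul_const _
      have e2 : Integrable (fun ω => (1 + Y ω) / 2 * Real.exp t) P :=
        (((integrable_const (1:ℝ)).add hint).div_const 2).mul_const _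
      rw [integral_add e1 e2, integral_mul_const, integral_mul_const,
        integral_div, integral_div,
        integral_sub (integrable_const _) hint, integral_add (integrable_const _) hint,
        hm, integral_const, Real.cosh_eq]
      simp
      ring
  _ ≤ Real.exp (t ^ 2 / 2) := Real.cosh_le_exp_half_sq t

open Real in
lemma tail_bound_of_bounded [IsProbabilityMeasure P] {ι : Type*} {Z : ι → Ω → ℝ}
    (hind : iIndepFun Z P) (hmeas : ∀ p, Measurable (Z p))
    (hb : ∀ p ω, |Z p ω| ≤ 1) (hm : ∀ p, ∫ ω, Z p ω ∂P = 0)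
    (s : Finset ι) (hs : s.Nonempty) {ε : ℝ} (hε : 0 ≤ ε) :
    (P {ω | ε ≤ ∑ p ∈ s, Z p ω}).toReal ≤ Real.exp (-(ε ^ 2) / (2 * s.card)) := by
  have hn : (0:ℝ) < s.card := by exact_mod_cast Finset.card_pos.2 hs
  set t : ℝ := ε / s.card with ht_def
  have ht : 0 ≤ t := div_nonneg hε hn.le
  have hmeas_sum : Measurable (∑ p ∈ s, Z p) := by
    have : (∑ p ∈ s, Z p) = fun ω => ∑ p ∈ s, Z p ω := by
      ext ω; rw [Finset.sum_apply]
    rw [this]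
    exact Finset.measurable_sum s fun p _ => hmeas p
  have hint : Integrable (fun ω => Real.exp (t * (∑ p ∈ s, Z p) ω)) P := by
    refine (integrable_const (Real.exp (|t| * s.card))).mono'
      ((hmeas_sum.const_mul t).exp).aestronglyMeasurable (Filter.Eventually.of_forall fun ω => ?_)
    rw [Real.norm_eq_abs, abs_of_pos (Real.exp_pos _)]
    apply Real.exp_le_exp.2
    calc t * (∑ p ∈ s, Z p) ω ≤ |t * (∑ p ∈ s, Z p) ω| := le_abs_self _
    _ = |t| * |(∑ p ∈ s, Z p) ω| := abs_mul _ _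
    _ ≤ |t| * s.card := by
        gcongr
        rw [Finset.sum_apply]
        calc |∑ p ∈ s, Z p ω| ≤ ∑ p ∈ s, |Z p ω| := Finset.abs_sum_le_sum_abs _ _
        _ ≤ ∑ p ∈ s, 1 := Finset.sum_le_sum fun p _ => hb p _
        _ = s.card := by simp
  have hset : {ω | ε ≤ ∑ p ∈ s, Z p ω} = {ω | ε ≤ (∑ p ∈ s, Z p) ω} := by
    ext ω; simp [Finset.sum_apply]
  rw [hset]
  calc (P {ω | ε ≤ (∑ p ∈ s, Z p) ω}).toReal
      ≤ Real.exp (-t * ε) * mgf (∑ p ∈ s, Z p) P t :=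
        measure_ge_le_exp_mul_mgf ε ht hint
  _ ≤ Real.exp (-t * ε) * Real.exp (s.card * (t ^ 2 / 2)) := by
      refine mul_le_mul_of_nonneg_left ?_ (Real.exp_pos _).le
      rw [hind.mgf_sum hmeas s]
      calc ∏ p ∈ s, mgf (Z p) P t ≤ ∏ p ∈ s, Real.exp (t ^ 2 / 2) :=
            Finset.prod_le_prod (fun p _ => mgf_nonneg)
              (fun p _ => mgf_bound_of_bounded (hmeas p) (hb p) (hm p) t)
      _ = Real.exp (s.card * (t ^ 2 / 2)) := by
            rw [Finset.prod_const, ← Real.exp_nat_mul]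
  _ = Real.exp (-(ε ^ 2) / (2 * s.card)) := by
      rw [← Real.exp_add]
      congr 1
      rw [ht_def]
      field_simp
      ring



lemma X_integrable [IsProbabilityMeasure P] {μ : Fin K → ℝ} (henv : BanditEnv P X μ)
    (i : Fin K) (k : ℕ) : Integrable (X i k) P := by
  refine (integrable_const (1:ℝ)).mono' (henv.1 i k).aestronglyMeasurable
    (Filter.Eventually.of_forall fun ω => ?_)
  have h := henv.2.1 i k ω
  rw [Real.norm_eq_abs, abs_le]
  exact ⟨by linarith [h.1], h.2⟩

lemma mean_mem [IsProbabilityMeasure P] {μ : Fin K → ℝ} (henv : BanditEnv P X μ)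
    (i : Fin K) : 0 ≤ μ i ∧ μ i ≤ 1 := by
  have hμ : μ i = ∫ ω, X i 0 ω ∂P := (henv.2.2.2.2 i 0).symm
  constructor
  · rw [hμ]; exact integral_nonneg fun ω => (henv.2.1 i 0 ω).1
  · rw [hμ]
    calc ∫ ω, X i 0 ω ∂P ≤ ∫ _ω, (1:ℝ) ∂P :=
          integral_mono (X_integrable henv i 0) (integrable_const 1)
            (fun ω => (henv.2.1 i 0 ω).2)
    _ = 1 := by simp


end FairBandit

open FairBandit MeasureTheory ProbabilityTheory

set_option maxHeartbeats 1600000 in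
/-- For the strict-rate-constrained UCB algorithm there is
an absolute constant `C > 0` such that
`Reg_T ≤ ∑_{i : Δ_i > 0} [ (16 ln T / Δ_i)·(1-Kv)/(1-(K-1)v) + 2(1-Kv)²·Δ_i ] + C·K`,
where `v = 1/L` and `Reg_T = E[∑_{t ∈ I} (μ* - μ(i_t))]` with `I` the set of
non-prescheduled rounds. -/
theorem strict_ucb_regret_bound :
    ∃ C : ℝ, 0 < C ∧
      ∀ (Ω : Type) (_ : MeasurableSpace Ω) (P : Measure Ω), IsProbabilityMeasure P →
      ∀ (K T L : ℕ) (S : Finset ℕ) (g : ℕ → Fin K) (X : Fin K → ℕ → Ω → ℝ)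
        (μ : Fin K → ℝ) (istar : Fin K) (arm : ℕ → Ω → Fin K),
        2 ≤ K → max K 2 ≤ T → K ≤ L →
        S ⊆ Finset.Icc 1 L → S.card = K → Set.BijOn g ↑S (Set.univ : Set (Fin K)) →
        BanditEnv P X μ → StrictUCB T L S g X arm →
        (∀ j, μ j ≤ μ istar) →
        (∫ ω, (∑ t ∈ freeRounds K L T S, (μ istar - μ (arm t ω))) ∂P) ≤
          (∑ i ∈ (Finset.univ : Finset (Fin K)).filter (fun i => 0 < μ istar - μ i),
            ((16 * Real.log T / (μ istar - μ i)) *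
                ((1 - (K : ℝ) * (1 / (L : ℝ))) / (1 - ((K : ℝ) - 1) * (1 / (L : ℝ))))
              + 2 * (1 - (K : ℝ) * (1 / (L : ℝ))) ^ 2 * (μ istar - μ i))) + C * K := by
  classical
  refine ⟨5, by norm_num, ?_⟩
  intro Ω mΩ P hP K T L S g X μ istar arm hK hT hKL hS hSc hg henv halg hmaxμ
  have hT2 : 2 ≤ T := le_trans (le_max_right _ _) hT
  have hKT : K ≤ T := le_trans (le_max_left _ _) hT
  have hTpos : (0:ℝ) < (T:ℝ) := by exact_mod_cast (by omega : 0 < T)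
  have hLpos : 0 < L := by omega
  have hLR : (0:ℝ) < (L:ℝ) := by exact_mod_cast hLpos
  have hlog : 0 ≤ Real.log T := Real.log_nonneg (by exact_mod_cast (by omega : 1 ≤ T))
  have hKpos : (0:ℝ) ≤ 5 * (K:ℝ) := by positivity
  rcases eq_or_lt_of_le hKL with hKL' | hKL'
  · -- L = K : no free rounds
    have hSall : S = Finset.Icc 1 L :=
      Finset.eq_of_subset_of_card_le hS (by rw [Nat.card_Icc, hSc]; omega)
    have hfree : freeRounds K L T S = ∅ := by
      rw [freeRounds, Finset.filter_eq_empty_iff]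
      intro t ht
      simp only [not_not]
      rw [hSall]
      have := Nat.mod_lt (t - K - 1) hLpos
      exact Finset.mem_Icc.2 ⟨Nat.le_add_left 1 _, by simp only [offset]; omega⟩
    rw [hfree]
    simp only [Finset.sum_empty, integral_zero]
    have hL0 : (1 : ℝ) - (K:ℝ) * (1/(L:ℝ)) = 0 := by
      have hKLr : (K:ℝ) = (L:ℝ) := by exact_mod_cast hKL'
      field_simp [hKLr]
      linarith
    have hz : ∀ i ∈ (Finset.univ : Finset (Fin K)).filter (fun i => 0 < μ istar - μ i),
        ((16 * Real.log T / (μ istar - μ i)) *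
            ((1 - (K : ℝ) * (1 / (L : ℝ))) / (1 - ((K : ℝ) - 1) * (1 / (L : ℝ))))
          + 2 * (1 - (K : ℝ) * (1 / (L : ℝ))) ^ 2 * (μ istar - μ i)) = 0 := by
      intro i _
      rw [hL0]
      simp
    rw [Finset.sum_congr rfl hz]
    simp only [Finset.sum_const_zero, zero_add]
    exact hKpos
  -- main case K < L
  set Δ : Fin K → ℝ := fun i => μ istar - μ i with hΔdef
  have hΔ0 : ∀ i, 0 ≤ Δ i := fun i => sub_nonneg.2 (hmaxμ i)
  have hΔ1 : ∀ i, Δ i ≤ 1 := fun i => by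
    have h1 := (mean_mem henv istar).2
    have h2 := (mean_mem henv i).1
    simp only [hΔdef]; linarith
  set r : ℝ := ((L:ℝ) - K) / ((L:ℝ) - K + 1) with hrdef
  have hLKpos : (0:ℝ) < (L:ℝ) - K := by
    have : (K:ℝ) < (L:ℝ) := by exact_mod_cast hKL'
    linarith
  have hr0 : 0 ≤ r := by rw [hrdef]; positivity
  have hr1 : r ≤ 1 := by
    rw [hrdef, div_le_one (by linarith)]; linarith
  have hdenom : (1:ℝ) - ((K : ℝ) - 1) * (1 / (L : ℝ)) = ((L:ℝ) - K + 1) / L := by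
    field_simp
    ring
  have hnum : (1:ℝ) - (K : ℝ) * (1 / (L : ℝ)) = ((L:ℝ) - K) / L := by
    field_simp
  have hratio : (1 - (K : ℝ) * (1 / (L : ℝ))) / (1 - ((K : ℝ) - 1) * (1 / (L : ℝ))) = r := by
    rw [hdenom, hnum, hrdef, div_div_div_comm, div_self hLR.ne', div_one]
  -- the bad event
  set grid := ((Finset.univ : Finset (Fin K)) ×ˢ Finset.Icc 1 T) with hgrid
  set A : Fin K × ℕ → Set Ω := fun p =>
    {ω | 2 * Real.sqrt (p.2 * Real.log T) <
      |(∑ k ∈ Finset.range p.2, X p.1 k ω) - p.2 * μ p.1|} with hA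
  have hAmeas : ∀ p, MeasurableSet (A p) := by
    intro p
    have hm0 : Measurable fun ω => (∑ k ∈ Finset.range p.2, X p.1 k ω) - p.2 * μ p.1 :=
      (Finset.measurable_sum _ fun k _ => henv.1 p.1 k).sub measurable_const
    have hm : Measurable fun ω => |(∑ k ∈ Finset.range p.2, X p.1 k ω) - p.2 * μ p.1| := by
      simp only [abs_eq_max_neg]
      exact hm0.max hm0.neg
    exact measurableSet_lt measurable_const hm
  set B : Set Ω := ⋃ p ∈ grid, A p with hB
  have hBmeas : MeasurableSet B := Finset.measurableSet_biUnion _ fun p _ => hAmeas p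
  -- probability of each bad event
  have hZmean : ∀ (i : Fin K) (k : ℕ), ∫ ω, (X i k ω - μ i) ∂P = 0 := by
    intro i k
    rw [integral_sub (X_integrable henv i k) (integrable_const _), henv.2.2.2.2 i k]
    simp
  have hZbdd : ∀ (i : Fin K) (k : ℕ) (ω : Ω), |X i k ω - μ i| ≤ 1 := by
    intro i k ω
    have h := henv.2.1 i k ω
    have h2 := mean_mem henv i
    rw [abs_le]
    constructor <;> [linarith [h.1, h2.2]; linarith [h.2, h2.1]]
  have hAbound : ∀ p ∈ grid, (P (A p)).toReal ≤ 2 * Real.exp (-(2:ℝ) * Real.log T) := by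
    rintro ⟨i, n⟩ hp
    have hn := Finset.mem_Icc.1 (Finset.mem_product.1 hp).2
    have hn1 : 1 ≤ n := hn.1
    have hnR : (0:ℝ) < (n:ℝ) := by exact_mod_cast hn1
    set Z : Fin K × ℕ → Ω → ℝ := fun q ω => X q.1 q.2 ω - μ q.1 with hZ
    set Zn : Fin K × ℕ → Ω → ℝ := fun q ω => μ q.1 - X q.1 q.2 ω with hZn
    have hindZ : iIndepFun Z P :=
      henv.2.2.1.comp (fun q x => x - μ q.1) (fun q => measurable_id.sub_const _)
    have hindZn : iIndepFun Zn P :=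
      henv.2.2.1.comp (fun q x => μ q.1 - x) (fun q => (measurable_id.const_sub _))
    have hmeasZ : ∀ q, Measurable (Z q) := fun q => (henv.1 q.1 q.2).sub_const _
    have hmeasZn : ∀ q, Measurable (Zn q) := fun q => (henv.1 q.1 q.2).const_sub _
    have hbZ : ∀ q ω, |Z q ω| ≤ 1 := fun q ω => hZbdd q.1 q.2 ω
    have hbZn : ∀ q ω, |Zn q ω| ≤ 1 := fun q ω => by
      rw [show Zn q ω = -(Z q ω) by simp only [hZ, hZn]; rw [neg_sub], abs_neg]; exact hbZ q ω
    have hmZ : ∀ q, ∫ ω, Z q ω ∂P = 0 := fun q => hZmean q.1 q.2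
    have hmZn : ∀ q, ∫ ω, Zn q ω ∂P = 0 := fun q => by
      have : (fun ω => Zn q ω) = fun ω => -(Z q ω) := by
        funext ω; simp only [hZ, hZn]; rw [neg_sub]
      rw [this, integral_neg, hmZ q, neg_zero]
    set s : Finset (Fin K × ℕ) := {i} ×ˢ Finset.range n with hs
    have hscard : s.card = n := by
      rw [hs, Finset.card_product, Finset.card_singleton, Finset.card_range, one_mul]
    have hsne : s.Nonempty := by
      rw [← Finset.card_pos, hscard]; omega
    have hsumZ : ∀ ω, ∑ q ∈ s, Z q ω = (∑ k ∈ Finset.range n, X i k ω) - n * μ i := by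
      intro ω
      rw [hs, Finset.sum_product, Finset.sum_singleton]
      simp only [hZ]
      rw [Finset.sum_sub_distrib, Finset.sum_const, Finset.card_range, nsmul_eq_mul]
    have hsumZn : ∀ ω, ∑ q ∈ s, Zn q ω = -((∑ k ∈ Finset.range n, X i k ω) - n * μ i) := by
      intro ω
      have : ∑ q ∈ s, Zn q ω = -∑ q ∈ s, Z q ω := by
        rw [← Finset.sum_neg_distrib]
        exact Finset.sum_congr rfl fun q _ => by simp only [hZ, hZn]; rw [neg_sub]
      rw [this, hsumZ]
    set ε : ℝ := 2 * Real.sqrt (n * Real.log T) with hε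
    have hε0 : 0 ≤ ε := by rw [hε]; positivity
    have hsub : A (i, n) ⊆ {ω | ε ≤ ∑ q ∈ s, Z q ω} ∪ {ω | ε ≤ ∑ q ∈ s, Zn q ω} := by
      intro ω hω
      simp only [hA, Set.mem_setOf_eq] at hω
      rcases abs_cases ((∑ k ∈ Finset.range n, X i k ω) - n * μ i) with ⟨he, _⟩ | ⟨he, _⟩
      · left
        simp only [Set.mem_setOf_eq, hsumZ]
        rw [he] at hω
        exact le_of_lt hω
      · right
        simp only [Set.mem_setOf_eq, hsumZn]
        rw [he] at hω
        linarith
    have htail1 := tail_bound_of_bounded hindZ hmeasZ hbZ hmZ s hsne hε0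
    have htail2 := tail_bound_of_bounded hindZn hmeasZn hbZn hmZn s hsne hε0
    have hexp : -(ε ^ 2) / (2 * (s.card : ℝ)) = -(2:ℝ) * Real.log T := by
      rw [hscard, hε]
      rw [mul_pow, Real.sq_sqrt (by positivity)]
      field_simp
    rw [hexp] at htail1 htail2
    have hne1 : P {ω | ε ≤ ∑ q ∈ s, Z q ω} ≠ ⊤ := measure_ne_top _ _
    have hne2 : P {ω | ε ≤ ∑ q ∈ s, Zn q ω} ≠ ⊤ := measure_ne_top _ _
    calc (P (A (i, n))).toReal
        ≤ ((P {ω | ε ≤ ∑ q ∈ s, Z q ω}) + (P {ω | ε ≤ ∑ q ∈ s, Zn q ω})).toReal := by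
          apply ENNReal.toReal_mono (ENNReal.add_ne_top.2 ⟨hne1, hne2⟩)
          exact le_trans (measure_mono hsub) (measure_union_le _ _)
    _ = (P {ω | ε ≤ ∑ q ∈ s, Z q ω}).toReal + (P {ω | ε ≤ ∑ q ∈ s, Zn q ω}).toReal :=
          ENNReal.toReal_add hne1 hne2
    _ ≤ Real.exp (-(2:ℝ) * Real.log T) + Real.exp (-(2:ℝ) * Real.log T) := add_le_add htail1 htail2
    _ = 2 * Real.exp (-(2:ℝ) * Real.log T) := by ring
  -- total bad probability
  have hPB : (P B).toReal ≤ (K : ℝ) * T * (2 * Real.exp (-(2:ℝ) * Real.log T)) := by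
    have h1 : P B ≤ ∑ p ∈ grid, P (A p) := measure_biUnion_finset_le _ _
    have h2 : (P B).toReal ≤ ∑ p ∈ grid, (P (A p)).toReal := by
      calc (P B).toReal ≤ (∑ p ∈ grid, P (A p)).toReal :=
            ENNReal.toReal_mono (ENNReal.sum_lt_top.2 fun p _ => measure_lt_top P _).ne h1
      _ = ∑ p ∈ grid, (P (A p)).toReal := ENNReal.toReal_sum fun p _ => measure_ne_top _ _
    calc (P B).toReal ≤ ∑ p ∈ grid, (P (A p)).toReal := h2
    _ ≤ ∑ _p ∈ grid, 2 * Real.exp (-(2:ℝ) * Real.log T) := Finset.sum_le_sum hAbound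
    _ = (K : ℝ) * T * (2 * Real.exp (-(2:ℝ) * Real.log T)) := by
        rw [Finset.sum_const, nsmul_eq_mul, hgrid, Finset.card_product, Finset.card_univ,
          Fintype.card_fin, Nat.card_Icc, Nat.add_sub_cancel]
        push_cast
        ring
  -- good-event pointwise bound
  set fil := (Finset.univ : Finset (Fin K)).filter (fun i => 0 < μ istar - μ i) with hfil
  set term : Fin K → ℝ := fun i =>
    (16 * Real.log T / (μ istar - μ i)) *
        ((1 - (K : ℝ) * (1 / (L : ℝ))) / (1 - ((K : ℝ) - 1) * (1 / (L : ℝ))))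
      + 2 * (1 - (K : ℝ) * (1 / (L : ℝ))) ^ 2 * (μ istar - μ i) with hterm
  have hMcast : (((L - K : ℕ)) : ℝ) = (L : ℝ) - K := by
    push_cast [Nat.cast_sub hKL]
    ring
  have hgoodbound : ∀ ω, ω ∉ B →
      (∑ t ∈ freeRounds K L T S, (μ istar - μ (arm t ω))) ≤
      (∑ i ∈ fil, term i) + 2 * K := by
    intro ω hω
    have hgood : ∀ (j : Fin K) (n : ℕ), 1 ≤ n → n ≤ T →
        |(∑ k ∈ Finset.range n, X j k ω) - n * μ j| ≤ 2 * Real.sqrt (n * Real.log T) := by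
      intro j n h1 h2
      by_contra hc
      push_neg at hc
      refine hω ?_
      rw [hB]
      refine Set.mem_iUnion₂.2 ⟨(j, n), ?_, ?_⟩
      · rw [hgrid]
        exact Finset.mem_product.2 ⟨Finset.mem_univ _, Finset.mem_Icc.2 ⟨h1, h2⟩⟩
      · simp only [hA, Set.mem_setOf_eq]
        exact hc
    have hfibbound : ∀ i : Fin K,
        (∑ t ∈ (freeRounds K L T S).filter (fun t => arm t ω = i), (μ istar - μ (arm t ω)))
        ≤ if 0 < μ istar - μ i then 16 * Real.log T / (μ istar - μ i) * r + 2 else 0 := by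
      intro i
      have hconst : ∀ t ∈ (freeRounds K L T S).filter (fun t => arm t ω = i),
          μ istar - μ (arm t ω) = μ istar - μ i := fun t ht => by
        rw [(Finset.mem_filter.1 ht).2]
      rw [Finset.sum_congr rfl hconst, Finset.sum_const, nsmul_eq_mul]
      by_cases hi : 0 < μ istar - μ i
      · rw [if_pos hi]
        have hkey : ∀ t ∈ freeRounds K L T S, arm t ω = i →
            (pullCount arm i (t - 1) ω : ℝ) ≤ 16 * Real.log T / (μ istar - μ i) ^ 2 := by
          intro t ht hit
          have htm := Finset.mem_Icc.1 (Finset.mem_filter.1 ht).1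
          have hsmall := pull_small hT2 halg hgood hi (by omega : K < t) htm.2
            (Finset.mem_filter.1 ht).2 hit
          rw [le_div_iff₀ (by positivity)]
          exact hsmall
        have hcb := count_bound hKL' hS hSc hg halg ω i
          (show (0:ℝ) ≤ 16 * Real.log T / (μ istar - μ i) ^ 2 by positivity) hkey
        rw [hMcast] at hcb
        have hstep : (((freeRounds K L T S).filter (fun t => arm t ω = i)).card : ℝ)
            * (μ istar - μ i)
            ≤ ((16 * Real.log T / (μ istar - μ i) ^ 2 + 2) * ((L:ℝ) - K) / ((L:ℝ) - K + 1))
              * (μ istar - μ i) := mul_le_mul_of_nonneg_right hcb hi.le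
        refine le_trans hstep ?_
        have hexpand : ((16 * Real.log T / (μ istar - μ i) ^ 2 + 2) * ((L:ℝ) - K) /
            ((L:ℝ) - K + 1)) * (μ istar - μ i)
            = 16 * Real.log T / (μ istar - μ i) * r + 2 * r * (μ istar - μ i) := by
          rw [hrdef]
          field_simp
        rw [hexpand]
        have h2r : 2 * r * (μ istar - μ i) ≤ 2 := by
          have := hΔ1 i
          simp only [hΔdef] at this
          nlinarith [hr0, hr1, hi.le]
        linarith
      · rw [if_neg hi]
        have hΔz : μ istar - μ i = 0 := le_antisymm (not_lt.1 hi) (hΔ0 i)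
        rw [hΔz, mul_zero]
    calc (∑ t ∈ freeRounds K L T S, (μ istar - μ (arm t ω)))
        = ∑ i : Fin K, ∑ t ∈ (freeRounds K L T S).filter (fun t => arm t ω = i),
            (μ istar - μ (arm t ω)) :=
          (Finset.sum_fiberwise (freeRounds K L T S) (fun t => arm t ω)
            (fun t => μ istar - μ (arm t ω))).symm
    _ ≤ ∑ i : Fin K, (if 0 < μ istar - μ i then
          16 * Real.log T / (μ istar - μ i) * r + 2 else 0) :=
          Finset.sum_le_sum fun i _ => hfibbound i
    _ = ∑ i ∈ fil, (16 * Real.log T / (μ istar - μ i) * r + 2) :=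
          (Finset.sum_filter _ _).symm
    _ = (∑ i ∈ fil, 16 * Real.log T / (μ istar - μ i) * r) + fil.card * 2 := by
          rw [Finset.sum_add_distrib, Finset.sum_const, nsmul_eq_mul]
    _ ≤ (∑ i ∈ fil, term i) + 2 * K := by
          have h1 : ∀ i ∈ fil, 16 * Real.log T / (μ istar - μ i) * r ≤ term i := by
            intro i hi
            have hipos : 0 < μ istar - μ i := (Finset.mem_filter.1 hi).2
            rw [hterm]
            simp only
            rw [hratio]
            have : 0 ≤ 2 * (1 - (K : ℝ) * (1 / (L : ℝ))) ^ 2 * (μ istar - μ i) := by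
              positivity
            linarith
          have h2 : (fil.card : ℝ) ≤ K := by
            have hcard : fil.card ≤ K := by
              rw [hfil]
              calc ((Finset.univ : Finset (Fin K)).filter (fun i => 0 < μ istar - μ i)).card
                  ≤ (Finset.univ : Finset (Fin K)).card := Finset.card_filter_le _ _
              _ = K := by simp
            exact_mod_cast hcard
          have h3 := Finset.sum_le_sum h1
          linarith
  -- integral assembly
  have hf0 : ∀ ω, 0 ≤ ∑ t ∈ freeRounds K L T S, (μ istar - μ (arm t ω)) :=
    fun ω => Finset.sum_nonneg fun t _ => sub_nonneg.2 (hmaxμ _)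
  have hfT : ∀ ω, (∑ t ∈ freeRounds K L T S, (μ istar - μ (arm t ω))) ≤ (T:ℝ) := by
    intro ω
    calc (∑ t ∈ freeRounds K L T S, (μ istar - μ (arm t ω)))
        ≤ ∑ _t ∈ freeRounds K L T S, (1:ℝ) := Finset.sum_le_sum fun t _ => by
          have h1 := (mean_mem henv (arm t ω)).1
          have h2 := (mean_mem henv istar).2
          linarith
    _ = ((freeRounds K L T S).card : ℝ) := by rw [Finset.sum_const, nsmul_eq_mul, mul_one]
    _ ≤ (T:ℝ) := by
          have : (freeRounds K L T S).card ≤ T := by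
            calc (freeRounds K L T S).card ≤ (Finset.Icc (K+1) T).card :=
                  Finset.card_filter_le _ _
            _ = T - K := by rw [Nat.card_Icc]; omega
            _ ≤ T := Nat.sub_le _ _
          exact_mod_cast this
  set D : ℝ := (∑ i ∈ fil, term i) + 2 * K with hD
  have htermnonneg : ∀ i ∈ fil, 0 ≤ term i := by
    intro i hi
    have hipos : 0 < μ istar - μ i := (Finset.mem_filter.1 hi).2
    rw [hterm]
    simp only
    rw [hratio]
    have h1 : 0 ≤ 16 * Real.log T / (μ istar - μ i) * r := by positivity
    have h2 : 0 ≤ 2 * (1 - (K : ℝ) * (1 / (L : ℝ))) ^ 2 * (μ istar - μ i) := by positivity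
    linarith
  have hDnonneg : 0 ≤ D := by
    rw [hD]
    have h1 := Finset.sum_nonneg htermnonneg
    have h2K : (0:ℝ) ≤ 2 * (K:ℝ) := by positivity
    linarith
  have hle : ∀ ω, (∑ t ∈ freeRounds K L T S, (μ istar - μ (arm t ω)))
      ≤ D + B.indicator (fun _ => (T:ℝ)) ω := by
    intro ω
    by_cases hω : ω ∈ B
    · rw [Set.indicator_of_mem hω]
      have := hfT ω
      linarith
    · rw [Set.indicator_of_notMem hω, add_zero]
      rw [hD]
      have h2K : (0:ℝ) ≤ 2 * K := by positivity
      exact hgoodbound ω hω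
  have hint : Integrable (fun ω => D + B.indicator (fun _ => (T:ℝ)) ω) P :=
    (integrable_const D).add ((integrable_const (T:ℝ)).indicator hBmeas)
  have hIle := integral_mono_of_nonneg (Filter.Eventually.of_forall hf0) hint
    (Filter.Eventually.of_forall hle)
  have hIright : ∫ ω, (D + B.indicator (fun _ => (T:ℝ)) ω) ∂P
      = D + (P B).toReal * T := by
    rw [integral_add (integrable_const D) ((integrable_const (T:ℝ)).indicator hBmeas),
      integral_const, integral_indicator_const _ hBmeas]
    simp [measure_univ, smul_eq_mul, Measure.real]
  have hTexp : (T:ℝ) * ((K : ℝ) * T * (2 * Real.exp (-(2:ℝ) * Real.log T))) = 2 * K := by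
    rw [show (-(2:ℝ) * Real.log T) = -(Real.log T + Real.log T) by ring, Real.exp_neg,
      Real.exp_add, Real.exp_log hTpos]
    field_simp
  have hPBfin : (P B).toReal * (T:ℝ) ≤ 2 * K := by
    calc (P B).toReal * (T:ℝ) ≤ ((K : ℝ) * T * (2 * Real.exp (-(2:ℝ) * Real.log T))) * T :=
          mul_le_mul_of_nonneg_right hPB (by positivity)
    _ = 2 * K := by rw [← hTexp]; ring
  calc (∫ ω, (∑ t ∈ freeRounds K L T S, (μ istar - μ (arm t ω))) ∂P)
      ≤ D + (P B).toReal * T := by rw [← hIright]; exact hIle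
  _ ≤ D + 2 * K := by linarith
  _ = (∑ i ∈ fil, term i) + 2 * K + 2 * K := by rw [hD]
  _ ≤ (∑ i ∈ fil, term i) + 5 * K := by
      have : (0:ℝ) ≤ (K:ℝ) := by positivity
      linarith
end

section
/- Let T ≥ 2 be an integer, let X_1, X_2, … be i.i.d. random variables taking values in [0,1] with mean μ on a probability space, and let N be any random variable on the same space (with arbitrary dependence on the X_j) taking values in the integer interval {k_s, …, k_e}, where 1 ≤ k_s ≤ k_e are integers. Then P( μ − (1/N)·Σ_{j=1}^{N} X_j ≥ 2·√(ln T / N) ) ≤ (k_e − k_s + 1)/T². -/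
open MeasureTheory ProbabilityTheory

section Aux

variable {Ω : Type} [MeasurableSpace Ω] (P : Measure Ω) [IsProbabilityMeasure P]

lemma integrable_of_bdd {f : Ω → ℝ} (hf : Measurable f) (C : ℝ) (h : ∀ ω, |f ω| ≤ C) :
    Integrable f P :=
  (integrable_const C).mono' hf.aestronglyMeasurable
    (ae_of_all _ fun ω => by simpa [Real.norm_eq_abs] using h ω)

/-- Crude Hoeffding-type mgf bound via convexity. -/
lemma mgf_le_of_mem_Icc {Y : Ω → ℝ} (hmeas : Measurable Y)
    (hrange : ∀ ω, Y ω ∈ Set.Icc (-1 : ℝ) 1) (hmean : ∫ ω, Y ω ∂P = 0) (t : ℝ) :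
    mgf Y P t ≤ Real.exp (t ^ 2 / 2) := by
  have hYint : Integrable Y P := integrable_of_bdd P hmeas 1 fun ω =>
    abs_le.2 ⟨(hrange ω).1, (hrange ω).2⟩
  have key : ∀ ω, Real.exp (t * Y ω) ≤
      (Real.exp (-t) + Real.exp t) / 2 + Y ω * ((Real.exp t - Real.exp (-t)) / 2) := by
    intro ω
    obtain ⟨h1, h2⟩ := hrange ω
    have := convexOn_exp.2 (Set.mem_univ (-t)) (Set.mem_univ t)
      (by linarith : (0:ℝ) ≤ (1 - Y ω) / 2) (by linarith : (0:ℝ) ≤ (1 + Y ω) / 2)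
      (by ring : (1 - Y ω) / 2 + (1 + Y ω) / 2 = 1)
    simp only [smul_eq_mul] at this
    calc Real.exp (t * Y ω) = Real.exp ((1 - Y ω) / 2 * (-t) + (1 + Y ω) / 2 * t) := by
          ring_nf
      _ ≤ (1 - Y ω) / 2 * Real.exp (-t) + (1 + Y ω) / 2 * Real.exp t := this
      _ = (Real.exp (-t) + Real.exp t) / 2 + Y ω * ((Real.exp t - Real.exp (-t)) / 2) := by
          ring
  have hintL : Integrable (fun ω => Real.exp (t * Y ω)) P := by
    refine integrable_of_bdd P (hmeas.const_mul t).exp (Real.exp |t|) fun ω => ?_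
    rw [abs_of_pos (Real.exp_pos _)]
    apply Real.exp_le_exp.2
    calc t * Y ω ≤ |t * Y ω| := le_abs_self _
      _ = |t| * |Y ω| := abs_mul _ _
      _ ≤ |t| * 1 := mul_le_mul_of_nonneg_left
          (abs_le.2 ⟨(hrange ω).1, (hrange ω).2⟩) (abs_nonneg _)
      _ = |t| := mul_one _
  calc mgf Y P t = ∫ ω, Real.exp (t * Y ω) ∂P := rfl
    _ ≤ ∫ ω, ((Real.exp (-t) + Real.exp t) / 2 +
        Y ω * ((Real.exp t - Real.exp (-t)) / 2)) ∂P :=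
        integral_mono hintL ((integrable_const _).add (hYint.mul_const _)) key
    _ = (Real.exp (-t) + Real.exp t) / 2 := by
        rw [integral_add (integrable_const _) (hYint.mul_const _), integral_const,
          integral_mul_const, hmean]
        simp
    _ = Real.cosh t := by rw [Real.cosh_eq]; ring
    _ ≤ Real.exp (t ^ 2 / 2) := Real.cosh_le_exp_half_sq t

lemma fixed_n_bound (T : ℕ) (X : ℕ → Ω → ℝ) (μ : ℝ)
    (hT : 2 ≤ T)
    (hXmeas : ∀ j, Measurable (X j))
    (hXrange : ∀ j ω, X j ω ∈ Set.Icc (0 : ℝ) 1)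
    (hXindep : iIndepFun X P)
    (hXmean : ∀ j, ∫ ω, X j ω ∂P = μ)
    (n : ℕ) (hn : 1 ≤ n) :
    P {ω | 2 * Real.sqrt (Real.log T / n) ≤ μ - (∑ j ∈ Finset.range n, X j ω) / n} ≤
      ENNReal.ofReal (1 / (T : ℝ) ^ 2) := by
  have hXint : ∀ j, Integrable (X j) P := fun j => integrable_of_bdd P (hXmeas j) 1 fun ω =>
    abs_le.2 ⟨by linarith [(hXrange j ω).1], (hXrange j ω).2⟩
  have hμ : μ ∈ Set.Icc (0:ℝ) 1 := by
    rw [← hXmean 0]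
    refine ⟨integral_nonneg fun ω => (hXrange 0 ω).1, ?_⟩
    calc ∫ ω, X 0 ω ∂P ≤ ∫ _ω, (1:ℝ) ∂P :=
          integral_mono (hXint 0) (integrable_const 1) (fun ω => (hXrange 0 ω).2)
      _ = 1 := by simp
  set Y : ℕ → Ω → ℝ := fun j ω => μ - X j ω with hY
  have hYmeas : ∀ j, Measurable (Y j) := fun j => measurable_const.sub (hXmeas j)
  have hYrange : ∀ j ω, Y j ω ∈ Set.Icc (-1 : ℝ) 1 := fun j ω =>
    ⟨by simp only [hY]; linarith [hμ.1, (hXrange j ω).2],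
     by simp only [hY]; linarith [hμ.2, (hXrange j ω).1]⟩
  have hYmean : ∀ j, ∫ ω, Y j ω ∂P = 0 := fun j => by
    simp only [hY]
    rw [integral_sub (integrable_const μ) (hXint j), hXmean j]
    simp
  have hYindep : iIndepFun Y P :=
    hXindep.comp (fun _ : ℕ => fun x : ℝ => μ - x)
      (fun _ => measurable_const.sub measurable_id)
  set L := Real.log T with hL
  have hT1 : (1:ℝ) < T := by exact_mod_cast Nat.lt_of_lt_of_le one_lt_two hT
  have hL0 : 0 < L := Real.log_pos hT1
  have hn0 : (0:ℝ) < n := by exact_mod_cast hn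
  set ε : ℝ := 2 * Real.sqrt (n * L) with hε
  set t : ℝ := ε / n with ht
  have hε0 : 0 < ε := by positivity
  have ht0 : 0 < t := by positivity
  have hεeq : ε = n * (2 * Real.sqrt (L / n)) := by
    have h1 : Real.sqrt ((n:ℝ) * L) = n * Real.sqrt (L / n) := by
      rw [show (n:ℝ) * L = (n:ℝ)^2 * (L / n) by field_simp,
        Real.sqrt_mul (sq_nonneg _), Real.sqrt_sq hn0.le]
    rw [hε, h1]; ring
  have hset : {ω | 2 * Real.sqrt (L / n) ≤ μ - (∑ j ∈ Finset.range n, X j ω) / n} =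
      {ω | ε ≤ (∑ j ∈ Finset.range n, Y j) ω} := by
    ext ω
    simp only [Set.mem_setOf_eq, Finset.sum_apply]
    have hsum : ∑ j ∈ Finset.range n, Y j ω = n * μ - ∑ j ∈ Finset.range n, X j ω := by
      simp [hY, Finset.sum_sub_distrib, mul_comm]
    rw [hsum, hεeq,
      show (n:ℝ) * μ - ∑ j ∈ Finset.range n, X j ω =
        n * (μ - (∑ j ∈ Finset.range n, X j ω) / n) by field_simp]
    exact (mul_le_mul_iff_of_pos_left hn0).symm
  have hSmeas : Measurable (∑ j ∈ Finset.range n, Y j) := by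
    have heq : (∑ j ∈ Finset.range n, Y j) = fun a => ∑ j ∈ Finset.range n, Y j a :=
      funext fun a => Finset.sum_apply a _ _
    rw [heq]
    exact Finset.measurable_sum _ fun j _ => hYmeas j
  have hZint : Integrable (fun ω => Real.exp (t * (∑ j ∈ Finset.range n, Y j) ω)) P := by
    refine integrable_of_bdd P ((hSmeas.const_mul t).exp) (Real.exp (|t| * n)) fun ω => ?_
    rw [abs_of_pos (Real.exp_pos _)]
    apply Real.exp_le_exp.2
    calc t * (∑ j ∈ Finset.range n, Y j) ω ≤ |t * (∑ j ∈ Finset.range n, Y j) ω| :=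
          le_abs_self _
      _ = |t| * |(∑ j ∈ Finset.range n, Y j) ω| := abs_mul _ _
      _ ≤ |t| * n := by
          refine mul_le_mul_of_nonneg_left ?_ (abs_nonneg _)
          calc |(∑ j ∈ Finset.range n, Y j) ω| = |∑ j ∈ Finset.range n, Y j ω| := by
                simp
            _ ≤ ∑ j ∈ Finset.range n, |Y j ω| := Finset.abs_sum_le_sum_abs _ _
            _ ≤ ∑ _j ∈ Finset.range n, (1:ℝ) := Finset.sum_le_sum fun j _ =>
                abs_le.2 ⟨(hYrange j ω).1, (hYrange j ω).2⟩
            _ = n := by simp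
  have hcher := measure_ge_le_exp_mul_mgf (μ := P) (X := ∑ j ∈ Finset.range n, Y j)
    ε ht0.le hZint
  have hmgf : mgf (∑ j ∈ Finset.range n, Y j) P t ≤ Real.exp ((n:ℝ) * (t ^ 2 / 2)) := by
    rw [hYindep.mgf_sum hYmeas]
    calc ∏ j ∈ Finset.range n, mgf (Y j) P t ≤
        ∏ _j ∈ Finset.range n, Real.exp (t ^ 2 / 2) :=
          Finset.prod_le_prod (fun j _ => mgf_nonneg)
            (fun j _ => mgf_le_of_mem_Icc P (hYmeas j) (hYrange j) (hYmean j) t)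
      _ = Real.exp (t ^ 2 / 2) ^ n := by simp
      _ = Real.exp ((n:ℝ) * (t ^ 2 / 2)) := (Real.exp_nat_mul _ n).symm
  have hfinal : (P {ω | ε ≤ (∑ j ∈ Finset.range n, Y j) ω}).toReal ≤ 1 / (T:ℝ) ^ 2 := by
    have hε2 : ε ^ 2 = 4 * ((n:ℝ) * L) := by
      rw [hε, mul_pow, Real.sq_sqrt (by positivity)]; norm_num
    have harith : -t * ε + (n:ℝ) * (t ^ 2 / 2) = -(2 * L) := by
      rw [ht]
      field_simp
      nlinarith [hε2]
    have hval : Real.exp (-(2 * L)) = 1 / (T:ℝ) ^ 2 := by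
      rw [Real.exp_neg, show (2:ℝ) * L = L + L by ring, Real.exp_add,
        hL, Real.exp_log (by positivity : (0:ℝ) < (T:ℝ))]
      rw [one_div, sq]
    calc (P {ω | ε ≤ (∑ j ∈ Finset.range n, Y j) ω}).toReal ≤
        Real.exp (-t * ε) * mgf (∑ j ∈ Finset.range n, Y j) P t := hcher
      _ ≤ Real.exp (-t * ε) * Real.exp ((n:ℝ) * (t ^ 2 / 2)) := by
          exact mul_le_mul_of_nonneg_left hmgf (Real.exp_pos _).le
      _ = Real.exp (-t * ε + (n:ℝ) * (t ^ 2 / 2)) := (Real.exp_add _ _).symm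
      _ = 1 / (T:ℝ) ^ 2 := by rw [harith, hval]
  rw [hset]
  exact (ENNReal.le_ofReal_iff_toReal_le (measure_ne_top P _) (by positivity)).2 hfinal

end Aux

/-- Let `T ≥ 2`, let `X 0, X 1, …` be i.i.d. `[0,1]`-valued
random variables with mean `μ` (the sample `X j` being the `(j+1)`-st sample),
and let `N` be any random variable taking values in the integer interval
`{ks, …, ke}` with `1 ≤ ks ≤ ke` (with arbitrary dependence on the `X j`).
Then `P( μ - (1/N)·∑_{j=1}^{N} X_j ≥ 2·√(ln T / N) ) ≤ (ke - ks + 1)/T²`. -/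
theorem random_index_hoeffding_lower (Ω : Type) [MeasurableSpace Ω]
    (P : Measure Ω) [IsProbabilityMeasure P] (T : ℕ) (X : ℕ → Ω → ℝ) (μ : ℝ)
    (N : Ω → ℕ) (ks ke : ℕ)
    (hT : 2 ≤ T)
    (hXmeas : ∀ j, Measurable (X j))
    (hXrange : ∀ j ω, X j ω ∈ Set.Icc (0 : ℝ) 1)
    (hXindep : iIndepFun X P)
    (hXident : ∀ j, Measure.map (X j) P = Measure.map (X 0) P)
    (hXmean : ∀ j, ∫ ω, X j ω ∂P = μ)
    (hNmeas : Measurable N)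
    (hks : 1 ≤ ks) (hke : ks ≤ ke)
    (hNrange : ∀ ω, N ω ∈ Set.Icc ks ke) :
    P {ω | μ - (∑ j ∈ Finset.range (N ω), X j ω) / (N ω) ≥
        2 * Real.sqrt (Real.log T / (N ω))} ≤
      ENNReal.ofReal (((ke : ℝ) - (ks : ℝ) + 1) / (T : ℝ) ^ 2) := by
  set A : ℕ → Set Ω := fun n =>
    {ω | 2 * Real.sqrt (Real.log T / n) ≤ μ - (∑ j ∈ Finset.range n, X j ω) / n} with hA
  have hsub : {ω | μ - (∑ j ∈ Finset.range (N ω), X j ω) / (N ω) ≥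
      2 * Real.sqrt (Real.log T / (N ω))} ⊆ ⋃ n ∈ Finset.Icc ks ke, A n := by
    intro ω hω
    refine Set.mem_biUnion (Finset.mem_Icc.2 ⟨(hNrange ω).1, (hNrange ω).2⟩) ?_
    exact hω
  calc P {ω | μ - (∑ j ∈ Finset.range (N ω), X j ω) / (N ω) ≥
        2 * Real.sqrt (Real.log T / (N ω))} ≤ P (⋃ n ∈ Finset.Icc ks ke, A n) :=
        measure_mono hsub
    _ ≤ ∑ n ∈ Finset.Icc ks ke, P (A n) := measure_biUnion_finset_le _ _
    _ ≤ ∑ _n ∈ Finset.Icc ks ke, ENNReal.ofReal (1 / (T : ℝ) ^ 2) :=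
        Finset.sum_le_sum fun n hn =>
          fixed_n_bound P T X μ hT hXmeas hXrange hXindep hXmean n
            (le_trans hks (Finset.mem_Icc.1 hn).1)
    _ = (Finset.Icc ks ke).card • ENNReal.ofReal (1 / (T : ℝ) ^ 2) := by
        rw [Finset.sum_const]
    _ = ENNReal.ofReal (((ke : ℝ) - (ks : ℝ) + 1) / (T : ℝ) ^ 2) := by
        rw [Nat.card_Icc, nsmul_eq_mul, ← ENNReal.ofReal_natCast,
          ← ENNReal.ofReal_mul (by positivity)]
        congr 1
        rw [Nat.cast_sub (by omega)]
        push_cast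
        ring
end

section
/- Let K ≤ L be positive integers, v = 1/L, S a K-element subset of {1,…,L}, and g : S → {1,…,K} a bijection. Let (i_t)_{t ≥ 1} be any sequence in {1,…,K} satisfying the strict-rate schedule: i_t = t for 1 ≤ t ≤ K, and for every t > K with t − K = (j−1)·L + s, s ∈ {1,…,L}, if s ∈ S then i_t = g(s) (the values of i_t at non-prescheduled rounds are arbitrary). Then for every arm a ∈ {1,…,K} and every integer t ≥ 1: #{s ≤ t : i_s = a} ≥ ⌊t·v⌋, and consequently the pulling rate satisfies #{s ≤ t : i_s = a}/t ≥ v − 1/t. -/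
open FairBandit

/-- Let `K ≤ L` be positive integers, `v = 1/L`, `S` a
`K`-element subset of `{1,…,L}` and `g : S → {1,…,K}` a bijection.  For any
sequence of arms following the strict-rate schedule (round `t` pulls arm `t`
for `t ≤ K`, and prescheduled rounds pull the prescheduled arm), every arm `a`
is pulled at least `⌊t·v⌋` times during the first `t` rounds, and hence its
pulling rate is at least `v - 1/t`. -/
theorem strict_schedule_min_rate (K L : ℕ) (hK : 0 < K) (hKL : K ≤ L)
    (S : Finset ℕ) (g : ℕ → Fin K)
    (hS : S ⊆ Finset.Icc 1 L) (hScard : S.card = K)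
    (hg : Set.BijOn g ↑S (Set.univ : Set (Fin K)))
    (arm : ℕ → Fin K)
    (hinit : ∀ t, 1 ≤ t → t ≤ K → ((arm t : ℕ) = t - 1))
    (hsched : ∀ t, K < t → offset K L t ∈ S → arm t = g (offset K L t)) :
    ∀ (a : Fin K) (t : ℕ), 1 ≤ t →
      Nat.floor ((t : ℝ) * (1 / (L : ℝ))) ≤
          ((Finset.Icc 1 t).filter (fun s => arm s = a)).card ∧
        1 / (L : ℝ) - 1 / (t : ℝ) ≤
          (((Finset.Icc 1 t).filter (fun s => arm s = a)).card : ℝ) / (t : ℝ) := by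
  have hL : 0 < L := hK.trans_le hKL
  intro a t ht
  obtain ⟨sa, hsaS, hgsa⟩ := hg.surjOn (Set.mem_univ a)
  have hsaS' : sa ∈ S := hsaS
  have hsa1 : 1 ≤ sa := (Finset.mem_Icc.mp (hS hsaS')).1
  have hsaL : sa ≤ L := (Finset.mem_Icc.mp (hS hsaS')).2
  have ha : (a : ℕ) < K := a.isLt
  set m := t / L with hm
  set f : ℕ → ℕ := fun j => if j = 0 then (a : ℕ) + 1 else K + (j - 1) * L + sa with hf
  have hf0 : f 0 = (a : ℕ) + 1 := by simp [hf]
  have hfs : ∀ n, f (n + 1) = K + n * L + sa := fun n => by simp [hf]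
  have hmono : StrictMono f := by
    apply strictMono_nat_of_lt_succ
    intro j
    cases j with
    | zero => rw [hf0, hfs]; omega
    | succ n =>
      rw [hfs, hfs]
      have : n * L < (n + 1) * L :=
        Nat.mul_lt_mul_of_lt_of_le (Nat.lt_succ_self n) le_rfl hL
      omega
  have hmL : m * L ≤ t := Nat.div_mul_le_self t L
  have hmem : ∀ j < m, f j ∈ (Finset.Icc 1 t).filter (fun s => arm s = a) := by
    intro j hj
    have hm1 : 1 ≤ m := Nat.lt_of_lt_of_le (Nat.zero_lt_of_lt hj) le_rfl
    rw [Finset.mem_filter, Finset.mem_Icc]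
    cases j with
    | zero =>
      have h1 : f 0 = (a : ℕ) + 1 := by simp [hf]
      have hle : (a : ℕ) + 1 ≤ t := by
        have : L ≤ m * L := Nat.le_mul_of_pos_left L hm1
        omega
      refine ⟨⟨by omega, hle⟩, ?_⟩
      have := hinit ((a : ℕ) + 1) (by omega) (by omega)
      rw [h1]
      exact Fin.ext (by simpa using this)
    | succ n =>
      have h1 : f (n + 1) = K + n * L + sa := by simp [hf]
      have hn2 : n + 2 ≤ m := by omega
      have hle : K + n * L + sa ≤ t := by
        have h2 : (n + 2) * L ≤ m * L := Nat.mul_le_mul_right L hn2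
        have h3 : (n + 2) * L = n * L + L + L := by ring
        omega
      have hKlt : K < f (n + 1) := by omega
      have hoff : offset K L (f (n + 1)) = sa := by
        rw [h1]
        unfold FairBandit.offset
        have h4 : K + n * L + sa - K - 1 = n * L + (sa - 1) := by omega
        rw [h4, Nat.add_comm (n * L) (sa - 1), Nat.add_mul_mod_self_right,
          Nat.mod_eq_of_lt (by omega)]
        omega
      refine ⟨⟨by omega, hle⟩, ?_⟩
      rw [hsched (f (n + 1)) hKlt (by rw [hoff]; exact hsaS'), hoff, hgsa]
  have hcard : m ≤ ((Finset.Icc 1 t).filter (fun s => arm s = a)).card := by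
    have := Finset.card_le_card_of_injOn f
      (fun j hj => hmem j (Finset.mem_range.mp hj))
      (hmono.injective.injOn)
    simpa using this
  have hfloor : Nat.floor ((t : ℝ) * (1 / (L : ℝ))) = m := by
    rw [mul_one_div, Nat.floor_div_natCast, Nat.floor_natCast]
  constructor
  · rw [hfloor]; exact hcard
  · have ht' : (0 : ℝ) < t := by positivity
    have hL' : (0 : ℝ) < L := by positivity
    have h1 : t < m * L + L := by
      rw [hm]; exact Nat.lt_div_mul_add hL
    have h1' : (t : ℝ) < m * L + L := by exact_mod_cast h1
    have hc' : (m : ℝ) ≤ ((Finset.Icc 1 t).filter (fun s => arm s = a)).card := by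
      exact_mod_cast hcard
    rw [sub_le_iff_le_add, ← add_div, div_le_div_iff₀ hL' ht']
    nlinarith [hc', h1', ht', hL', mul_le_mul_of_nonneg_right hc' hL'.le]
end
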